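/- arXiv:1311.5774 — 2 statements merged into one kernel-verified Lean document; each statement's English description precedes it below -/
import Mathlib

section
/- Let f(x) = exp(x − eˣ) be the standard Gumbel density and X a random variable with density f. Let ψ₂ = f''/f and ψ₃ = f'''/f. Then E[ψ₂(X)ψ₃(X)] = −13. -/
open MeasureTheory Real

open Set

lemma mom_integrable (n : ℕ) :
    IntegrableOn (fun u : ℝ => exp (-u) * u ^ n) (Ioi 0) := by
  have h := Real.GammaIntegral_convergent (s := (n : ℝ) + 1) (by positivity)
  simpa [Real.rpow_natCast] using h

lemma mom (n : ℕ) : ∫ u in Ioi (0:ℝ), exp (-u) * u ^ n = n.factorial := by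
  have h := Real.Gamma_eq_integral (s := (n : ℝ) + 1) (by positivity)
  rw [Real.Gamma_nat_eq_factorial] at h
  rw [h]
  norm_num [Real.rpow_natCast]


/-- For the standard Gumbel density `f(x) = exp(x − eˣ)`, `ψ₂ = f''/f` and `ψ₃ = f'''/f`,
`E[ψ₂(X)ψ₃(X)] = −13`. -/
theorem gumbel_psi2_psi3_moment
    (f : ℝ → ℝ) (hf : f = fun x => exp (x - exp x)) :
    ∫ x, (deriv (deriv f) x / f x) * (deriv (deriv (deriv f)) x / f x) * f x = -13 := by
  subst hf
  set g : ℝ → ℝ := fun u => exp (-u) *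
    (1 - 10*u + 28*u^2 - 26*u^3 + 9*u^4 - u^5) with hg
  have h1 : ∀ x : ℝ, HasDerivAt (fun x => exp (x - exp x))
      ((1 - exp x) * exp (x - exp x)) x := by
    intro x
    have := ((hasDerivAt_id x).sub (Real.hasDerivAt_exp x)).exp
    simpa [mul_comm] using this
  have hd1 : deriv (fun x => exp (x - exp x)) = fun x => (1 - exp x) * exp (x - exp x) :=
    funext fun x => (h1 x).deriv
  have h2 : ∀ x : ℝ, HasDerivAt (fun x => (1 - exp x) * exp (x - exp x))
      ((1 - 3*exp x + (exp x)^2) * exp (x - exp x)) x := by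
    intro x
    have := (((hasDerivAt_const x (1:ℝ)).sub (Real.hasDerivAt_exp x)).mul (h1 x))
    refine this.congr_deriv ?_
    simp only [Pi.sub_apply, Pi.add_apply, Pi.pow_apply]
    ring
  have hd2 : deriv (deriv (fun x => exp (x - exp x))) =
      fun x => (1 - 3*exp x + (exp x)^2) * exp (x - exp x) := by
    rw [hd1]; exact funext fun x => (h2 x).deriv
  have h3 : ∀ x : ℝ, HasDerivAt (fun x => (1 - 3*exp x + (exp x)^2) * exp (x - exp x))
      ((1 - 7*exp x + 6*(exp x)^2 - (exp x)^3) * exp (x - exp x)) x := by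
    intro x
    have := ((((hasDerivAt_const x (1:ℝ)).sub ((Real.hasDerivAt_exp x).const_mul 3)).add
      ((Real.hasDerivAt_exp x).pow 2)).mul (h1 x))
    refine this.congr_deriv ?_
    simp only [Pi.sub_apply, Pi.add_apply, Pi.pow_apply]
    ring
  have hd3 : deriv (deriv (deriv (fun x => exp (x - exp x)))) =
      fun x => (1 - 7*exp x + 6*(exp x)^2 - (exp x)^3) * exp (x - exp x) := by
    rw [hd2]; exact funext fun x => (h3 x).deriv
  have hpt : ∀ x : ℝ,
      (deriv (deriv (fun x => exp (x - exp x))) x / exp (x - exp x)) *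
        (deriv (deriv (deriv (fun x => exp (x - exp x)))) x / exp (x - exp x)) *
        exp (x - exp x) = |exp x| • g (exp x) := by
    intro x
    rw [hd3, hd2, hg]
    have hfx : exp (x - exp x) ≠ 0 := (exp_pos _).ne'
    have hE : exp (x - exp x) = exp x * exp (-exp x) := by
      rw [sub_eq_add_neg, exp_add]
    simp only []
    rw [mul_div_assoc, div_self hfx, mul_one, mul_div_assoc, div_self hfx, mul_one,
      hE, abs_of_pos (exp_pos x), smul_eq_mul]
    ring
  have himg : ∫ u in Ioi (0:ℝ), g u = ∫ x : ℝ, |exp x| • g (exp x) := by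
    have := integral_image_eq_integral_abs_deriv_smul MeasurableSet.univ
      (fun x _ => (Real.hasDerivAt_exp x).hasDerivWithinAt)
      (Real.exp_injective.injOn) g
    simpa [Set.image_univ, Real.range_exp] using this
  calc ∫ x : ℝ, (deriv (deriv (fun x => exp (x - exp x))) x / exp (x - exp x)) *
        (deriv (deriv (deriv (fun x => exp (x - exp x)))) x / exp (x - exp x)) *
        exp (x - exp x)
      = ∫ x : ℝ, |exp x| • g (exp x) := by
        exact congrArg _ (funext hpt)
    _ = ∫ u in Ioi (0:ℝ), g u := himg.symm
    _ = -13 := by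
        have hsplit : ∀ u : ℝ, g u =
            (exp (-u) * u^0) - 10*(exp (-u) * u^1) + 28*(exp (-u) * u^2)
              - 26*(exp (-u) * u^3) + 9*(exp (-u) * u^4) - (exp (-u) * u^5) := by
          intro u; rw [hg]; ring
        rw [funext hsplit]
        have i0 := mom_integrable 0
        have i1 := mom_integrable 1
        have i2 := mom_integrable 2
        have i3 := mom_integrable 3
        have i4 := mom_integrable 4
        have i5 := mom_integrable 5
        rw [integral_sub, integral_add, integral_sub, integral_add, integral_sub]
        · rw [mom 0, integral_const_mul, mom 1, integral_const_mul, mom 2,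
            integral_const_mul, mom 3, integral_const_mul, mom 4, mom 5]
          norm_num [Nat.factorial]
        · exact i0
        · exact i1.const_mul 10
        · exact (i0.sub (i1.const_mul 10))
        · exact i2.const_mul 28
        · exact ((i0.sub (i1.const_mul 10)).add (i2.const_mul 28))
        · exact i3.const_mul 26
        · exact (((i0.sub (i1.const_mul 10)).add (i2.const_mul 28)).sub (i3.const_mul 26))
        · exact i4.const_mul 9
        · exact ((((i0.sub (i1.const_mul 10)).add (i2.const_mul 28)).sub
            (i3.const_mul 26)).add (i4.const_mul 9))
        · exact i5
end

section
/- Let f(x) = exp(x − eˣ) be the standard Gumbel density, X with density f, ψ₁ = f'/f, ψ₂ = f''/f, I = E[ψ₁²], η₂ = E[ψ₂²]/I², η₃ = E[ψ₁³]/I^{3/2}, η₄ = E[ψ₁⁴]/I². Then η₃² = 4η₂ − (4/3)η₄ − 4, i.e., the Cauchy–Schwarz inequality η₃²/4 ≤ η₂ − η₄/3 − 1 is attained with equality for the Gumbel distribution. -/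
open MeasureTheory Real

private lemma gumbel_gamma_nat (n : ℕ) :
    ∫ t in Set.Ioi (0:ℝ), t ^ n * exp (-t) = (Nat.factorial n : ℝ) := by
  have h := Real.Gamma_eq_integral (s := n + 1) (by positivity)
  rw [Real.Gamma_nat_eq_factorial] at h
  rw [show ((n:ℝ) + 1) - 1 = (n:ℝ) by ring] at h
  rw [h]
  refine setIntegral_congr_fun measurableSet_Ioi (fun t ht => ?_)
  rw [Real.rpow_natCast, mul_comm]

private lemma gumbel_int_nat (n : ℕ) :
    IntegrableOn (fun t => t ^ n * exp (-t)) (Set.Ioi (0:ℝ)) := by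
  have h := Real.GammaIntegral_convergent (s := n + 1) (by positivity)
  rw [show ((n:ℝ) + 1) - 1 = (n:ℝ) by ring] at h
  refine h.congr_fun (fun t ht => ?_) measurableSet_Ioi
  beta_reduce
  rw [Real.rpow_natCast, mul_comm]

private lemma gumbel_moments (c₀ c₁ c₂ c₃ c₄ : ℝ) :
    (∫ t in Set.Ioi (0:ℝ), (c₀ + c₁*t + c₂*t^2 + c₃*t^3 + c₄*t^4) * exp (-t))
      = c₀ + c₁ + 2*c₂ + 6*c₃ + 24*c₄ := by
  have I0 := (gumbel_int_nat 0).const_mul c₀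
  have I1 := (gumbel_int_nat 1).const_mul c₁
  have I2 := (gumbel_int_nat 2).const_mul c₂
  have I3 := (gumbel_int_nat 3).const_mul c₃
  have I4 := (gumbel_int_nat 4).const_mul c₄
  rw [show (fun t : ℝ => (c₀ + c₁*t + c₂*t^2 + c₃*t^3 + c₄*t^4) * exp (-t))
      = fun t : ℝ => c₀*(t^0*exp (-t)) + (c₁*(t^1*exp (-t)) + (c₂*(t^2*exp (-t))
        + (c₃*(t^3*exp (-t)) + c₄*(t^4*exp (-t)))))
      from funext fun t => by ring]
  have h01 := integral_add I0 ((I1.add (I2.add (I3.add I4))))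
  have h12 := integral_add I1 (I2.add (I3.add I4))
  have h23 := integral_add I2 (I3.add I4)
  have h34 := integral_add I3 I4
  simp only [Pi.add_apply] at h01 h12 h23 h34
  rw [h01, h12, h23, h34]
  rw [integral_const_mul, integral_const_mul, integral_const_mul, integral_const_mul,
      integral_const_mul, gumbel_gamma_nat, gumbel_gamma_nat, gumbel_gamma_nat,
      gumbel_gamma_nat, gumbel_gamma_nat]
  norm_num [Nat.factorial]
  ring

private lemma gumbel_subst_exp (g : ℝ → ℝ) :
    (∫ x : ℝ, g (exp x) * exp (x - exp x)) = ∫ t in Set.Ioi (0:ℝ), g t * exp (-t) := by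
  have himg : exp '' Set.univ = Set.Ioi (0:ℝ) := by
    rw [Set.image_univ, Real.range_exp]
  have h := MeasureTheory.integral_image_eq_integral_abs_deriv_smul (s := Set.univ)
    (f := exp) (f' := exp) MeasurableSet.univ
    (fun x _ => (Real.hasDerivAt_exp x).hasDerivWithinAt)
    (Real.exp_injective.injOn) (fun t => g t * exp (-t))
  rw [himg, Measure.restrict_univ] at h
  rw [h]
  refine integral_congr_ae (Filter.Eventually.of_forall fun x => ?_)
  simp only [smul_eq_mul, abs_of_pos (Real.exp_pos x)]
  rw [Real.exp_sub, Real.exp_neg]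
  field_simp

/-- For the standard Gumbel density the Cauchy–Schwarz inequality for the eta-cumulants
is attained with equality: `η₃² = 4η₂ − (4/3)η₄ − 4`. -/
theorem gumbel_eta_cauchy_schwarz_equality
    (f : ℝ → ℝ) (hf : f = fun x => exp (x - exp x))
    (I η₂ η₃ η₄ : ℝ)
    (hI : I = ∫ x, (deriv f x / f x) ^ 2 * f x)
    (hη₂ : η₂ = (∫ x, (deriv (deriv f) x / f x) ^ 2 * f x) / I ^ 2)
    (hη₃ : η₃ = (∫ x, (deriv f x / f x) ^ 3 * f x) / I ^ ((3 : ℝ) / 2))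
    (hη₄ : η₄ = (∫ x, (deriv f x / f x) ^ 4 * f x) / I ^ 2) :
    η₃ ^ 2 = 4 * η₂ - (4 / 3) * η₄ - 4 := by
  subst hf
  -- first derivative
  have hd1 : ∀ x : ℝ, HasDerivAt (fun x => exp (x - exp x))
      ((1 - exp x) * exp (x - exp x)) x := by
    intro x
    have := ((hasDerivAt_id x).sub (Real.hasDerivAt_exp x)).exp
    simpa [mul_comm] using this
  have hdf : deriv (fun x => exp (x - exp x)) = fun x => (1 - exp x) * exp (x - exp x) :=
    funext fun x => (hd1 x).deriv
  -- second derivative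
  have hd2 : ∀ x : ℝ, HasDerivAt (fun x => (1 - exp x) * exp (x - exp x))
      ((((1 - exp x) ^ 2) - exp x) * exp (x - exp x)) x := by
    intro x
    have h := ((hasDerivAt_const x (1:ℝ)).sub (Real.hasDerivAt_exp x)).mul (hd1 x)
    exact h.congr_deriv (by simp only [Pi.sub_apply]; ring)
  have hdf2 : deriv (deriv (fun x => exp (x - exp x)))
      = fun x => (((1 - exp x) ^ 2) - exp x) * exp (x - exp x) := by
    rw [hdf]; exact funext fun x => (hd2 x).deriv
  have hne : ∀ x : ℝ, exp (x - exp x) ≠ 0 := fun x => Real.exp_ne_zero _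
  -- compute I
  have hIval : I = 1 := by
    rw [hI, hdf]
    have hsub := gumbel_subst_exp (fun t => (1 - t) ^ 2)
    have heq : (∫ x : ℝ, ((1 - exp x) * exp (x - exp x) / exp (x - exp x)) ^ 2
          * (fun x => exp (x - exp x)) x)
        = ∫ x : ℝ, (1 - exp x) ^ 2 * exp (x - exp x) :=
      integral_congr_ae (Filter.Eventually.of_forall fun x => by
        simp only [mul_div_assoc, div_self (hne x), mul_one])
    rw [heq, hsub]
    rw [show (fun t : ℝ => (1 - t) ^ 2 * exp (-t))
        = fun t : ℝ => ((1:ℝ) + (-2)*t + 1*t^2 + 0*t^3 + 0*t^4) * exp (-t)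
        from funext fun t => by ring]
    rw [gumbel_moments]; norm_num
  -- compute η₂
  have hη₂val : η₂ = 5 := by
    rw [hη₂, hdf2, hIval]
    have hsub := gumbel_subst_exp (fun t => (((1 - t) ^ 2) - t) ^ 2)
    have heq : (∫ x : ℝ, ((((1 - exp x) ^ 2) - exp x) * exp (x - exp x) / exp (x - exp x)) ^ 2
          * (fun x => exp (x - exp x)) x)
        = ∫ x : ℝ, (((1 - exp x) ^ 2) - exp x) ^ 2 * exp (x - exp x) :=
      integral_congr_ae (Filter.Eventually.of_forall fun x => by
        simp only [mul_div_assoc, div_self (hne x), mul_one])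
    rw [heq, hsub]
    rw [show (fun t : ℝ => (((1 - t) ^ 2) - t) ^ 2 * exp (-t))
        = fun t : ℝ => ((1:ℝ) + (-6)*t + 11*t^2 + (-6)*t^3 + 1*t^4) * exp (-t)
        from funext fun t => by ring]
    rw [gumbel_moments]; norm_num
  -- compute η₃
  have hη₃val : η₃ = -2 := by
    rw [hη₃, hdf, hIval]
    have hsub := gumbel_subst_exp (fun t => (1 - t) ^ 3)
    have heq : (∫ x : ℝ, ((1 - exp x) * exp (x - exp x) / exp (x - exp x)) ^ 3
          * (fun x => exp (x - exp x)) x)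
        = ∫ x : ℝ, (1 - exp x) ^ 3 * exp (x - exp x) :=
      integral_congr_ae (Filter.Eventually.of_forall fun x => by
        simp only [mul_div_assoc, div_self (hne x), mul_one])
    rw [heq, hsub]
    rw [show (fun t : ℝ => (1 - t) ^ 3 * exp (-t))
        = fun t : ℝ => ((1:ℝ) + (-3)*t + 3*t^2 + (-1)*t^3 + 0*t^4) * exp (-t)
        from funext fun t => by ring]
    rw [gumbel_moments, Real.one_rpow]; norm_num
  -- compute η₄
  have hη₄val : η₄ = 9 := by
    rw [hη₄, hdf, hIval]
    have hsub := gumbel_subst_exp (fun t => (1 - t) ^ 4)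
    have heq : (∫ x : ℝ, ((1 - exp x) * exp (x - exp x) / exp (x - exp x)) ^ 4
          * (fun x => exp (x - exp x)) x)
        = ∫ x : ℝ, (1 - exp x) ^ 4 * exp (x - exp x) :=
      integral_congr_ae (Filter.Eventually.of_forall fun x => by
        simp only [mul_div_assoc, div_self (hne x), mul_one])
    rw [heq, hsub]
    rw [show (fun t : ℝ => (1 - t) ^ 4 * exp (-t))
        = fun t : ℝ => ((1:ℝ) + (-4)*t + 6*t^2 + (-4)*t^3 + 1*t^4) * exp (-t)
        from funext fun t => by ring]
    rw [gumbel_moments]; norm_num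
  rw [hη₂val, hη₃val, hη₄val]
  norm_num
end
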